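/- Fix integers k ≥ 1 and κ, m, n with k ≤ κ < m and 2m+1 ≤ n ≤ 3m−κ. Let G₁ = K_{n−2m} + \overline{K}_κ + \overline{K}_m + \overline{K}_{m−κ}. Then the vertex connectivity of G₁ equals κ. -/

import Mathlib

open SimpleGraph

/-- A set of vertices is independent if no two of its vertices are adjacent. -/
def SimpleGraph.IsIndepSet' {V : Type*} (G : SimpleGraph V) (s : Set V) : Prop :=
  s.Pairwise fun u v => ¬ G.Adj u v

/-- The independence number `α(G)`: the maximum size of an independent set. -/
noncomputable def SimpleGraph.indepNum' {V : Type*} (G : SimpleGraph V) [Fintype V] : ℕ :=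
  sSup {n | ∃ s : Finset V, G.IsIndepSet' ↑s ∧ s.card = n}

/-- `G` is `k`-connected: `G` has more than `k` vertices and deleting any set of
fewer than `k` vertices leaves a connected graph. -/
def SimpleGraph.IsKConnected {V : Type*} (G : SimpleGraph V) [Fintype V] (k : ℕ) : Prop :=
  k < Fintype.card V ∧ ∀ s : Set V, s.ncard < k → (G.induce sᶜ).Connected

/-- The connectivity `κ(G)`: the largest `k` such that `G` is `k`-connected. -/
noncomputable def SimpleGraph.connectivity' {V : Type*} (G : SimpleGraph V) [Fintype V] : ℕ :=
  sSup {k | G.IsKConnected k}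

/-- `σ_k(G)`: the minimum degree sum over independent sets of size `k`
(`⊤` if there is no such set). -/
noncomputable def SimpleGraph.sigmaDeg {V : Type*} (G : SimpleGraph V) [Fintype V]
    (k : ℕ) : ℕ∞ := by
  classical
  exact ⨅ s ∈ {s : Finset V | G.IsIndepSet' ↑s ∧ s.card = k}, (∑ x ∈ s, G.degree x : ℕ∞)

/-- A "blowup" graph: vertices are grouped in parts indexed by `ι`, where part `i` has
`sizes i` vertices, part `i` induces a complete graph if `compl i` holds (an edgeless graph
otherwise), and two parts `i`, `j` are completely joined iff `rel i j ∨ rel j i`. -/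
def blowup {ι : Type} (sizes : ι → ℕ) (compl : ι → Prop) (rel : ι → ι → Prop) :
    SimpleGraph (Σ i, Fin (sizes i)) where
  Adj x y := (x.1 = y.1 ∧ compl x.1 ∧ x ≠ y) ∨ (x.1 ≠ y.1 ∧ (rel x.1 y.1 ∨ rel y.1 x.1))
  symm := by
    constructor
    rintro x y (⟨h1, h2, h3⟩ | ⟨h1, h2⟩)
    · exact Or.inl ⟨h1.symm, h1 ▸ h2, h3.symm⟩
    · exact Or.inr ⟨h1.symm, h2.symm⟩
  loopless := by constructor; rintro x (⟨_, _, h⟩ | ⟨h, _⟩) <;> exact h rfl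

/-- The graph `G₁ = K_{n-2m} + K̄_κ + K̄_m + K̄_{m-κ}` (sequential join). -/
def GraphG1 (n m κ : ℕ) : SimpleGraph (Σ i : Fin 4, Fin (![n - 2 * m, κ, m, m - κ] i)) :=
  blowup ![n - 2 * m, κ, m, m - κ] (fun i => i = 0) (fun i j => (i : ℕ) + 1 = (j : ℕ))

/-- For `G₁ = K_{n-2m} + K̄_κ + K̄_m + K̄_{m-κ}` (with `k ≤ κ < m` and
`2m+1 ≤ n ≤ 3m-κ`), the vertex connectivity is `κ`. -/
lemma aux_ncard_range (sizes : Fin 4 → ℕ) (i : Fin 4) :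
    (Set.range (@Sigma.mk (Fin 4) (fun j => Fin (sizes j)) i)).ncard = sizes i := by
  rw [Set.ncard_eq_toFinset_card', Set.toFinset_range,
    Finset.card_image_of_injective _ sigma_mk_injective, Finset.card_univ, Fintype.card_fin]

lemma aux_exists_part (sizes : Fin 4 → ℕ) (i : Fin 4) (s : Set (Σ j, Fin (sizes j)))
    (h : s.ncard < sizes i) : ∃ y, (⟨i, y⟩ : Σ j, Fin (sizes j)) ∉ s := by
  by_contra h'
  push_neg at h'
  have hsub : Set.range (@Sigma.mk (Fin 4) (fun j => Fin (sizes j)) i) ⊆ s := by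
    rintro _ ⟨y, rfl⟩; exact h' y
  have h2 := Set.ncard_le_ncard hsub (Set.toFinite s)
  rw [aux_ncard_range] at h2
  omega

lemma aux_ncard_part (sizes : Fin 4 → ℕ) (i : Fin 4) :
    ({v : Σ j, Fin (sizes j) | v.1 = i}).ncard = sizes i := by
  have he : {v : Σ j, Fin (sizes j) | v.1 = i} =
      Set.range (@Sigma.mk (Fin 4) (fun j => Fin (sizes j)) i) := by
    ext ⟨j, x⟩
    simp only [Set.mem_setOf_eq, Set.mem_range]
    constructor
    · rintro rfl; exact ⟨x, rfl⟩
    · rintro ⟨y, h⟩; exact (congrArg Sigma.fst h).symm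
  rw [he, aux_ncard_range]

lemma aux_adj (n m κ : ℕ) (x y : Σ i : Fin 4, Fin (![n - 2 * m, κ, m, m - κ] i))
    (h1 : x.1 ≠ y.1) (h2 : (x.1 : ℕ) + 1 = (y.1 : ℕ) ∨ (y.1 : ℕ) + 1 = (x.1 : ℕ)) :
    (GraphG1 n m κ).Adj x y :=
  Or.inr ⟨h1, h2⟩

lemma aux_conn (n m κ : ℕ) (hκm : κ < m)
    (s : Set (Σ i : Fin 4, Fin (![n - 2 * m, κ, m, m - κ] i))) (hs : s.ncard < κ) :
    ((GraphG1 n m κ).induce sᶜ).Connected := by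
  obtain ⟨y1, hy1⟩ := aux_exists_part _ 1 s (by simpa using hs)
  obtain ⟨y2, hy2⟩ := aux_exists_part _ 2 s (by simpa using hs.trans hκm)
  rw [connected_iff]
  refine ⟨?_, ⟨⟨⟨1, y1⟩, hy1⟩⟩⟩
  have hcb : ((GraphG1 n m κ).induce sᶜ).Adj ⟨⟨2, y2⟩, hy2⟩ ⟨⟨1, y1⟩, hy1⟩ :=
    aux_adj n m κ ⟨2, y2⟩ ⟨1, y1⟩ (show (2:Fin 4) ≠ 1 by decide) (Or.inr (show ((1:Fin 4):ℕ) + 1 = ((2:Fin 4):ℕ) by decide))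
  have key : ∀ w : ↥sᶜ, ((GraphG1 n m κ).induce sᶜ).Reachable w ⟨⟨1, y1⟩, hy1⟩ := by
    rintro ⟨⟨i, x⟩, hw⟩
    fin_cases i
    · exact Adj.reachable
        (show ((GraphG1 n m κ).induce sᶜ).Adj ⟨⟨0, x⟩, hw⟩ ⟨⟨1, y1⟩, hy1⟩ from
          aux_adj n m κ ⟨0, x⟩ ⟨1, y1⟩ (show (0:Fin 4) ≠ 1 by decide) (Or.inl (show ((0:Fin 4):ℕ) + 1 = ((1:Fin 4):ℕ) by decide)))
    · exact (Adj.reachable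
        (show ((GraphG1 n m κ).induce sᶜ).Adj ⟨⟨1, x⟩, hw⟩ ⟨⟨2, y2⟩, hy2⟩ from
          aux_adj n m κ ⟨1, x⟩ ⟨2, y2⟩ (show (1:Fin 4) ≠ 2 by decide) (Or.inl (show ((1:Fin 4):ℕ) + 1 = ((2:Fin 4):ℕ) by decide)))).trans hcb.reachable
    · exact Adj.reachable
        (show ((GraphG1 n m κ).induce sᶜ).Adj ⟨⟨2, x⟩, hw⟩ ⟨⟨1, y1⟩, hy1⟩ from
          aux_adj n m κ ⟨2, x⟩ ⟨1, y1⟩ (show (2:Fin 4) ≠ 1 by decide) (Or.inr (show ((1:Fin 4):ℕ) + 1 = ((2:Fin 4):ℕ) by decide)))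
    · exact (Adj.reachable
        (show ((GraphG1 n m κ).induce sᶜ).Adj ⟨⟨3, x⟩, hw⟩ ⟨⟨2, y2⟩, hy2⟩ from
          aux_adj n m κ ⟨3, x⟩ ⟨2, y2⟩ (show (3:Fin 4) ≠ 2 by decide) (Or.inr (show ((2:Fin 4):ℕ) + 1 = ((3:Fin 4):ℕ) by decide)))).trans hcb.reachable
  intro u v
  exact (key u).trans (key v).symm

lemma aux_not_conn (n m κ : ℕ) (hκm : κ < m) (hn1 : 2 * m + 1 ≤ n) :
    ¬ ((GraphG1 n m κ).induce ({v : Σ i : Fin 4, Fin (![n - 2 * m, κ, m, m - κ] i) |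
        v.1 = 1})ᶜ).Connected := by
  have h0 : (0 : ℕ) < ![n - 2 * m, κ, m, m - κ] 0 := by simp; omega
  have h3 : (0 : ℕ) < ![n - 2 * m, κ, m, m - κ] 3 := by simp; omega
  set s : Set (Σ i : Fin 4, Fin (![n - 2 * m, κ, m, m - κ] i)) := {v | v.1 = 1} with hsdef
  intro hc
  have ha : (⟨0, ⟨0, h0⟩⟩ :
      Σ i : Fin 4, Fin (![n - 2 * m, κ, m, m - κ] i)) ∈ sᶜ := by
    intro h; exact absurd h (show ¬((0:Fin 4) = 1) by decide)
  have hd : (⟨3, ⟨0, h3⟩⟩ :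
      Σ i : Fin 4, Fin (![n - 2 * m, κ, m, m - κ] i)) ∈ sᶜ := by
    intro h; exact absurd h (show ¬((3:Fin 4) = 1) by decide)
  have key : ∀ {u v : ↥sᶜ} (_ : ((GraphG1 n m κ).induce sᶜ).Walk u v),
      (u : Σ i : Fin 4, Fin (![n - 2 * m, κ, m, m - κ] i)).1 = 0 →
      (v : Σ i : Fin 4, Fin (![n - 2 * m, κ, m, m - κ] i)).1 = 0 := by
    intro u v w
    induction w with
    | nil => exact id
    | @cons u b v h p ih =>
      intro hu
      apply ih
      have h' : (GraphG1 n m κ).Adj ↑u ↑b := h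
      rcases h' with ⟨h1, _, _⟩ | ⟨h1, h2 | h2⟩
      · exact hu ▸ h1.symm
      · exfalso
        rw [hu] at h2
        have hb1 : ((b : Σ i : Fin 4, Fin (![n - 2 * m, κ, m, m - κ] i)).1 : Fin 4) = 1 := by
          apply Fin.ext
          simpa using h2.symm
        exact b.2 hb1
      · exfalso
        rw [hu] at h2
        simp at h2
  obtain ⟨w⟩ := hc.preconnected ⟨_, ha⟩ ⟨_, hd⟩
  have hkey := key w rfl
  exact absurd hkey (show ¬((3:Fin 4) = 0) by decide)

theorem stmt_10 (k κ m n : ℕ) (hk : 1 ≤ k) (hkκ : k ≤ κ) (hκm : κ < m)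
    (hn1 : 2 * m + 1 ≤ n) (hn2 : n ≤ 3 * m - κ) :
    (GraphG1 n m κ).connectivity' = κ := by
  have hbound : ∀ k' ∈ {k' | (GraphG1 n m κ).IsKConnected k'}, k' ≤ κ := by
    intro k' hk'
    by_contra hlt
    push_neg at hlt
    have hconn := hk'.2 {v | v.1 = 1} (by rw [aux_ncard_part]; simpa using hlt)
    exact aux_not_conn n m κ hκm hn1 hconn
  have hmem : (GraphG1 n m κ).IsKConnected κ := by
    constructor
    · rw [Fintype.card_sigma]
      simp [Fin.sum_univ_four]
      omega
    · intro s hs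
      exact aux_conn n m κ hκm s hs
  exact le_antisymm (csSup_le ⟨κ, hmem⟩ hbound) (le_csSup ⟨κ, hbound⟩ hmem)
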